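/- Let R be a positive definite real symmetric d×d matrix and let A be an invertible real d×d matrix. Then the angular central Gaussian distribution μ_{A R Aᵀ} equals the pushforward of μ_R under the map x ↦ A x / ‖A x‖ on the unit sphere S^{d−1}. -/
import Mathlib


open MeasureTheory Matrix

/-- The centered Gaussian measure `N(0,S)` on `ℝ^d` (as `EuclideanSpace ℝ (Fin d)`). -/
noncomputable def gaussianE (d : ℕ) (S : Matrix (Fin d) (Fin d) ℝ) :
    Measure (EuclideanSpace ℝ (Fin d)) :=
  volume.withDensity fun x =>
    ENNReal.ofReal ((Real.sqrt ((2 * Real.pi) ^ d * S.det))⁻¹ *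
      Real.exp (-(1 / 2) * ((fun i => x i) ⬝ᵥ S⁻¹.mulVec fun i => x i)))

/-- The normalization map `x ↦ x / ‖x‖`. -/
noncomputable def normalizeSphere (d : ℕ) (x : EuclideanSpace ℝ (Fin d)) :
    EuclideanSpace ℝ (Fin d) := ‖x‖⁻¹ • x

/-- The angular central Gaussian distribution with scatter matrix `R`: the pushforward of
`N(0,R)` under `x ↦ x / ‖x‖`, viewed as a measure on the ambient space supported on the
unit sphere. -/
noncomputable def acg (d : ℕ) (R : Matrix (Fin d) (Fin d) ℝ) :
    Measure (EuclideanSpace ℝ (Fin d)) :=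
  (gaussianE d R).map (normalizeSphere d)

lemma measurableEquiv_map_withDensity {α β} [MeasurableSpace α] [MeasurableSpace β]
    (e : α ≃ᵐ β) (μ : Measure α) (f : α → ENNReal) (hf : Measurable f) :
    (μ.withDensity f).map e = (μ.map e).withDensity (f ∘ e.symm) := by
  ext s hs
  rw [Measure.map_apply e.measurable hs, withDensity_apply _ (e.measurable hs),
    withDensity_apply _ hs,
    setLIntegral_map hs (hf.comp e.symm.measurable) e.measurable]
  simp

lemma det_toEuclideanLin' (d : ℕ) (A : Matrix (Fin d) (Fin d) ℝ) :
    LinearMap.det (Matrix.toEuclideanLin A) = A.det := by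
  have h : Matrix.toEuclideanLin A =
      (((WithLp.linearEquiv 2 ℝ (Fin d → ℝ)).symm :
          (Fin d → ℝ) →ₗ[ℝ] EuclideanSpace ℝ (Fin d)) ∘ₗ
        (Matrix.toLin' A) ∘ₗ
        (((WithLp.linearEquiv 2 ℝ (Fin d → ℝ)).symm.symm :
          EuclideanSpace ℝ (Fin d) →ₗ[ℝ] (Fin d → ℝ)))) := rfl
  rw [h, LinearMap.det_conj, LinearMap.det_toLin']

lemma gaussianE_density_measurable (d : ℕ) (M : Matrix (Fin d) (Fin d) ℝ) :
    Measurable fun (x : EuclideanSpace ℝ (Fin d)) =>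
      ENNReal.ofReal ((Real.sqrt ((2 * Real.pi) ^ d * M.det))⁻¹ *
        Real.exp (-(1 / 2) * ((fun i => x i) ⬝ᵥ M⁻¹.mulVec fun i => x i))) := by
  have h1 : Measurable fun (x : EuclideanSpace ℝ (Fin d)) =>
      ((fun i => x i) ⬝ᵥ M⁻¹.mulVec fun i => x i) := by
    simp only [dotProduct, mulVec]
    exact Finset.measurable_sum _ fun i _ =>
      ((measurable_pi_apply i).comp (PiLp.continuous_ofLp 2 _).measurable).mul
        (Finset.measurable_sum _ fun j _ => measurable_const.mul
          ((measurable_pi_apply j).comp (PiLp.continuous_ofLp 2 _).measurable))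
  exact ENNReal.measurable_ofReal.comp
    (measurable_const.mul ((measurable_const.mul h1).exp))

lemma gaussianE_map (d : ℕ) (R A : Matrix (Fin d) (Fin d) ℝ)
    (hR : R.PosDef) (hA : IsUnit A) :
    (gaussianE d R).map (Matrix.toEuclideanLin A) = gaussianE d (A * R * Aᵀ) := by
  have hdet : IsUnit A.det := (Matrix.isUnit_iff_isUnit_det A).mp hA
  have hdet0 : A.det ≠ 0 := hdet.ne_zero
  have hAinv : A * A⁻¹ = 1 := Matrix.mul_nonsing_inv A hdet
  have hinvA : A⁻¹ * A = 1 := Matrix.nonsing_inv_mul A hdet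
  -- the linear equivalence given by `A`
  let L : EuclideanSpace ℝ (Fin d) ≃ₗ[ℝ] EuclideanSpace ℝ (Fin d) :=
    LinearEquiv.ofLinear (Matrix.toEuclideanLin A) (Matrix.toEuclideanLin A⁻¹)
      (by
        apply LinearMap.ext; intro x
        simp [Matrix.toEuclideanLin_apply, Matrix.mulVec_mulVec, hAinv])
      (by
        apply LinearMap.ext; intro x
        simp [Matrix.toEuclideanLin_apply, Matrix.mulVec_mulVec, hinvA])
  let e : EuclideanSpace ℝ (Fin d) ≃ᵐ EuclideanSpace ℝ (Fin d) :=
    L.toContinuousLinearEquiv.toHomeomorph.toMeasurableEquiv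
  have he : ⇑e = ⇑(Matrix.toEuclideanLin A) := rfl
  have hesymm : ∀ x, e.symm x = Matrix.toEuclideanLin A⁻¹ x := fun _ => rfl
  rw [gaussianE, ← he, measurableEquiv_map_withDensity e volume _
    (gaussianE_density_measurable d R)]
  have hvol : volume.map e = ENNReal.ofReal |(A.det)⁻¹| • volume := by
    have := Measure.map_linearMap_addHaar_eq_smul_addHaar (volume :
      Measure (EuclideanSpace ℝ (Fin d))) (f := (Matrix.toEuclideanLin A))
      (by rw [det_toEuclideanLin']; exact hdet0)
    rw [he, this, det_toEuclideanLin']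
  rw [hvol, withDensity_smul_measure, gaussianE,
    ← withDensity_smul' _ _ ENNReal.ofReal_ne_top]
  congr 1
  funext x
  -- compare densities
  have hR0 : 0 < R.det := hR.det_pos
  have hx : (fun i => (e.symm x) i) = A⁻¹ *ᵥ (fun i => x i) := rfl
  have hquad : ((fun i => (e.symm x) i) ⬝ᵥ R⁻¹.mulVec fun i => (e.symm x) i) =
      ((fun i => x i) ⬝ᵥ (A * R * Aᵀ)⁻¹.mulVec fun i => x i) := by
    rw [hx, Matrix.mul_inv_rev, Matrix.mul_inv_rev, ← Matrix.transpose_nonsing_inv,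
      ← Matrix.mulVec_mulVec, Matrix.dotProduct_mulVec _ A⁻¹ᵀ, Matrix.vecMul_transpose,
      ← Matrix.mulVec_mulVec, Matrix.dotProduct_mulVec]
  have hdet2 : (A * R * Aᵀ).det = A.det ^ 2 * R.det := by
    rw [Matrix.det_mul, Matrix.det_mul, Matrix.det_transpose]; ring
  have hsqrt : Real.sqrt ((2 * Real.pi) ^ d * (A * R * Aᵀ).det) =
      |A.det| * Real.sqrt ((2 * Real.pi) ^ d * R.det) := by
    rw [hdet2, show (2 * Real.pi) ^ d * (A.det ^ 2 * R.det) =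
        A.det ^ 2 * ((2 * Real.pi) ^ d * R.det) by ring,
      Real.sqrt_mul (sq_nonneg _), Real.sqrt_sq_eq_abs]
  simp only [Pi.smul_apply, smul_eq_mul, Function.comp_apply]
  rw [← ENNReal.ofReal_mul (abs_nonneg _), hquad, hsqrt, mul_inv, abs_inv, ← mul_assoc]

theorem acg_conj_map (d : ℕ) (R A : Matrix (Fin d) (Fin d) ℝ)
    (hR : R.PosDef) (hA : IsUnit A) :
    acg d (A * R * Aᵀ) =
      (acg d R).map fun x => normalizeSphere d (Matrix.toEuclideanLin A x) := by
  have hL : Measurable ⇑(Matrix.toEuclideanLin A) :=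
    (Matrix.toEuclideanLin A).continuous_of_finiteDimensional.measurable
  have hN : Measurable (normalizeSphere d) := by
    unfold normalizeSphere
    exact (measurable_norm.inv).smul measurable_id
  have hkey : ∀ x, normalizeSphere d (Matrix.toEuclideanLin A (normalizeSphere d x)) =
      normalizeSphere d (Matrix.toEuclideanLin A x) := by
    intro x
    by_cases hx : x = 0
    · simp [hx, normalizeSphere]
    · have hn : (‖x‖ : ℝ) ≠ 0 := norm_ne_zero_iff.mpr hx
      have hc0 : (0:ℝ) ≤ ‖x‖⁻¹ := inv_nonneg.mpr (norm_nonneg x)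
      simp only [normalizeSphere, _root_.map_smul, norm_smul, Real.norm_eq_abs,
        abs_of_nonneg hc0, mul_inv, inv_inv, smul_smul]
      congr 1
      rw [mul_comm ‖x‖ _, mul_assoc, mul_inv_cancel₀ hn, mul_one]
  rw [acg, acg, ← gaussianE_map d R A hR hA,
    Measure.map_map hN hL,
    Measure.map_map (show Measurable fun x => normalizeSphere d (Matrix.toEuclideanLin A x)
      from hN.comp hL) hN]
  congr 1
  funext x
  exact (hkey x).symm
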